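/- Let (Ω, 𝓕, ℙ) be a probability space, let U : Ω → ℝᵐ and Z : Ω → ℝⁿ be measurable with E[‖U‖²] < ∞ and E[‖Z‖²] < ∞, and set Ū = E[U], Z̄ = E[Z]. Let Υ₁, Υ₂ be symmetric positive definite m×m real matrices and M₁, M₂ be m×n real matrices. Then E[⟨U, Υ₁U⟩] + ⟨Ū, (Υ₂ − Υ₁)Ū⟩ + 2E[⟨U, M₁Z⟩] + 2⟨Ū, (M₂ − M₁)Z̄⟩ + E[⟨Z − Z̄, M₁ᵀΥ₁⁻¹M₁(Z − Z̄)⟩] + ⟨Z̄, M₂ᵀΥ₂⁻¹M₂Z̄⟩ = E[⟨(U − Ū) + Υ₁⁻¹M₁(Z − Z̄), Υ₁((U − Ū) + Υ₁⁻¹M₁(Z − Z̄))⟩] + ⟨Ū + Υ₂⁻¹M₂Z̄, Υ₂(Ū + Υ₂⁻¹M₂Z̄)⟩. -/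

import Mathlib

open Matrix MeasureTheory ENNReal

section Helpers
variable {Ω : Type*} {mF : MeasurableSpace Ω} {μ : Measure Ω} [IsProbabilityMeasure μ]

private lemma symm_dot' {k : ℕ} (S : Matrix (Fin k) (Fin k) ℝ) (hS : S.IsSymm) (u v : Fin k → ℝ) :
    u ⬝ᵥ (S *ᵥ v) = v ⬝ᵥ (S *ᵥ u) := by
  rw [dotProduct_mulVec, ← Matrix.mulVec_transpose, hS.eq, dotProduct_comm]

private lemma mul_integrable' (f g : Ω → ℝ) (hf : MemLp f 2 μ) (hg : MemLp g 2 μ) :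
    Integrable (fun ω => f ω * g ω) μ := by
  have hpqr : (1:ENNReal)/1 = 1/2 + 1/2 := by
    rw [ENNReal.div_self one_ne_zero ENNReal.one_ne_top, one_div, ENNReal.inv_two_add_inv_two]
  have := (MemLp.smul (p := 2) (q := 2) (r := 1) hg hf).integrable le_rfl
  exact this

omit [IsProbabilityMeasure μ] in
private lemma coord_memLp' {k : ℕ} (V : Ω → Fin k → ℝ) (hV : MemLp V 2 μ) (i : Fin k) :
    MemLp (fun ω => V ω i) 2 μ :=
  hV.of_le ((continuous_apply i).comp_aestronglyMeasurable hV.1)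
    (Filter.Eventually.of_forall fun ω => norm_le_pi_norm (V ω) i)

private lemma quad_integrable' {k l : ℕ} (B : Matrix (Fin k) (Fin l) ℝ)
    (V : Ω → Fin k → ℝ) (W : Ω → Fin l → ℝ) (hV : MemLp V 2 μ) (hW : MemLp W 2 μ) :
    Integrable (fun ω => V ω ⬝ᵥ (B *ᵥ W ω)) μ := by
  simp only [dotProduct, mulVec]
  apply integrable_finset_sum
  intro i _
  exact mul_integrable' _ _ (coord_memLp' V hV i)
    (memLp_finset_sum _ fun j _ => (coord_memLp' W hW j).const_mul (B i j))

private noncomputable def dotCLM' {k : ℕ} (d : Fin k → ℝ) : (Fin k → ℝ) →L[ℝ] ℝ :=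
  LinearMap.toContinuousLinearMap
    { toFun := fun x => d ⬝ᵥ x
      map_add' := fun x y => dotProduct_add d x y
      map_smul' := fun c x => by simp [dotProduct, Finset.mul_sum, mul_left_comm] }

omit [IsProbabilityMeasure μ] in
private lemma lin_integrable' {k : ℕ} (d : Fin k → ℝ) (V : Ω → Fin k → ℝ) (hV : Integrable V μ) :
    Integrable (fun ω => d ⬝ᵥ V ω) μ := by
  exact (dotCLM' d).integrable_comp hV

omit [IsProbabilityMeasure μ] in
private lemma lin_integral' {k : ℕ} (d : Fin k → ℝ) (V : Ω → Fin k → ℝ) (hV : Integrable V μ) :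
    ∫ ω, d ⬝ᵥ V ω ∂μ = d ⬝ᵥ (∫ ω, V ω ∂μ) := by
  exact ((dotCLM' d).integral_comp_comm hV)

private lemma cos_pt' {k l : ℕ} (S : Matrix (Fin k) (Fin k) ℝ) (hS : S.IsSymm)
    (hSinv : S * S⁻¹ = 1)
    (M : Matrix (Fin k) (Fin l) ℝ) (u : Fin k → ℝ) (z : Fin l → ℝ) :
    (u + S⁻¹ *ᵥ (M *ᵥ z)) ⬝ᵥ (S *ᵥ (u + S⁻¹ *ᵥ (M *ᵥ z)))
      = u ⬝ᵥ (S *ᵥ u) + 2 * (u ⬝ᵥ (M *ᵥ z)) + z ⬝ᵥ ((Mᵀ * S⁻¹ * M) *ᵥ z) := by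
  have h1 : S *ᵥ (S⁻¹ *ᵥ (M *ᵥ z)) = M *ᵥ z := by
    rw [mulVec_mulVec, hSinv, one_mulVec]
  have h2 : (S⁻¹ *ᵥ (M *ᵥ z)) ⬝ᵥ (S *ᵥ u) = u ⬝ᵥ (M *ᵥ z) := by
    rw [symm_dot' S hS, h1]
  have key : ∀ (y : Fin k → ℝ), (M *ᵥ z) ⬝ᵥ y = z ⬝ᵥ (Mᵀ *ᵥ y) := fun y => by
    rw [dotProduct_comm, dotProduct_mulVec, dotProduct_comm, ← Matrix.mulVec_transpose]
  have h3 : (S⁻¹ *ᵥ (M *ᵥ z)) ⬝ᵥ (M *ᵥ z) = z ⬝ᵥ ((Mᵀ * S⁻¹ * M) *ᵥ z) := by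
    rw [dotProduct_comm, key, mulVec_mulVec, mulVec_mulVec, Matrix.mul_assoc]
  rw [mulVec_add, h1, add_dotProduct, dotProduct_add, dotProduct_add, h2, h3]
  ring

end Helpers

/-- Mean-field completion-of-squares identity: with `Ū = E[U]`, `Z̄ = E[Z]`
and `Υ₁, Υ₂` symmetric positive definite,
`E⟨U,Υ₁U⟩ + ⟨Ū,(Υ₂−Υ₁)Ū⟩ + 2E⟨U,M₁Z⟩ + 2⟨Ū,(M₂−M₁)Z̄⟩
 + E⟨Z−Z̄, M₁ᵀΥ₁⁻¹M₁(Z−Z̄)⟩ + ⟨Z̄, M₂ᵀΥ₂⁻¹M₂Z̄⟩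
 = E⟨(U−Ū)+Υ₁⁻¹M₁(Z−Z̄), Υ₁((U−Ū)+Υ₁⁻¹M₁(Z−Z̄))⟩ + ⟨Ū+Υ₂⁻¹M₂Z̄, Υ₂(Ū+Υ₂⁻¹M₂Z̄)⟩`. -/
theorem meanfield_completion_of_squares
    {Ω : Type*} {mF : MeasurableSpace Ω} (μ : Measure Ω) [IsProbabilityMeasure μ]
    (m n : ℕ)
    (U : Ω → Fin m → ℝ) (hUmeas : Measurable U) (hU : MemLp U 2 μ)
    (Z : Ω → Fin n → ℝ) (hZmeas : Measurable Z) (hZ : MemLp Z 2 μ)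
    (Ubar : Fin m → ℝ) (hUbar : Ubar = ∫ ω, U ω ∂μ)
    (Zbar : Fin n → ℝ) (hZbar : Zbar = ∫ ω, Z ω ∂μ)
    (Υ₁ Υ₂ : Matrix (Fin m) (Fin m) ℝ) (hΥ₁s : Υ₁.IsSymm) (hΥ₂s : Υ₂.IsSymm)
    (hΥ₁pd : ∀ v : Fin m → ℝ, v ≠ 0 → 0 < v ⬝ᵥ (Υ₁ *ᵥ v))
    (hΥ₂pd : ∀ v : Fin m → ℝ, v ≠ 0 → 0 < v ⬝ᵥ (Υ₂ *ᵥ v))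
    (M₁ M₂ : Matrix (Fin m) (Fin n) ℝ) :
    (∫ ω, (U ω) ⬝ᵥ (Υ₁ *ᵥ (U ω)) ∂μ)
      + Ubar ⬝ᵥ ((Υ₂ - Υ₁) *ᵥ Ubar)
      + 2 * ∫ ω, (U ω) ⬝ᵥ (M₁ *ᵥ (Z ω)) ∂μ
      + 2 * (Ubar ⬝ᵥ ((M₂ - M₁) *ᵥ Zbar))
      + (∫ ω, (Z ω - Zbar) ⬝ᵥ ((M₁ᵀ * Υ₁⁻¹ * M₁) *ᵥ (Z ω - Zbar)) ∂μ)
      + Zbar ⬝ᵥ ((M₂ᵀ * Υ₂⁻¹ * M₂) *ᵥ Zbar)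
    = (∫ ω, ((U ω - Ubar) + Υ₁⁻¹ *ᵥ (M₁ *ᵥ (Z ω - Zbar)))
          ⬝ᵥ (Υ₁ *ᵥ ((U ω - Ubar) + Υ₁⁻¹ *ᵥ (M₁ *ᵥ (Z ω - Zbar)))) ∂μ)
      + (Ubar + Υ₂⁻¹ *ᵥ (M₂ *ᵥ Zbar)) ⬝ᵥ (Υ₂ *ᵥ (Ubar + Υ₂⁻¹ *ᵥ (M₂ *ᵥ Zbar))) := by
  -- invertibility
  have hherm : ∀ (S : Matrix (Fin m) (Fin m) ℝ), S.IsSymm → S.IsHermitian := by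
    intro S hS
    simpa [Matrix.IsHermitian, Matrix.conjTranspose_eq_transpose_of_trivial] using hS.eq
  have hpd1 : Υ₁.PosDef := Matrix.posDef_iff_dotProduct_mulVec.mpr ⟨hherm _ hΥ₁s, fun v hv => by simpa using hΥ₁pd v hv⟩
  have hpd2 : Υ₂.PosDef := Matrix.posDef_iff_dotProduct_mulVec.mpr ⟨hherm _ hΥ₂s, fun v hv => by simpa using hΥ₂pd v hv⟩
  have hinv1 : Υ₁ * Υ₁⁻¹ = 1 := Matrix.mul_nonsing_inv _ hpd1.det_pos.ne'.isUnit
  have hinv2 : Υ₂ * Υ₂⁻¹ = 1 := Matrix.mul_nonsing_inv _ hpd2.det_pos.ne'.isUnit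
  -- notation
  set a : Ω → ℝ := fun ω => U ω ⬝ᵥ (Υ₁ *ᵥ U ω) with ha
  set b : Ω → ℝ := fun ω => U ω ⬝ᵥ (M₁ *ᵥ Z ω) with hb
  set q : Ω → ℝ := fun ω => (Z ω - Zbar) ⬝ᵥ ((M₁ᵀ * Υ₁⁻¹ * M₁) *ᵥ (Z ω - Zbar)) with hq
  set l1 : Ω → ℝ := fun ω => (Υ₁ *ᵥ Ubar) ⬝ᵥ U ω with hl1
  set l2 : Ω → ℝ := fun ω => (M₁ *ᵥ Zbar) ⬝ᵥ U ω with hl2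
  set l3 : Ω → ℝ := fun ω => (M₁ᵀ *ᵥ Ubar) ⬝ᵥ Z ω with hl3
  set c1 : ℝ := Ubar ⬝ᵥ (Υ₁ *ᵥ Ubar) with hc1
  set c2 : ℝ := Ubar ⬝ᵥ (M₁ *ᵥ Zbar) with hc2
  -- pointwise identity
  have hpt : ∀ ω, ((U ω - Ubar) + Υ₁⁻¹ *ᵥ (M₁ *ᵥ (Z ω - Zbar)))
          ⬝ᵥ (Υ₁ *ᵥ ((U ω - Ubar) + Υ₁⁻¹ *ᵥ (M₁ *ᵥ (Z ω - Zbar))))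
      = a ω + 2 * b ω + q ω - 2 * l1 ω - 2 * l2 ω - 2 * l3 ω + (c1 + 2 * c2) := by
    intro ω
    rw [cos_pt' Υ₁ hΥ₁s hinv1 M₁ (U ω - Ubar) (Z ω - Zbar)]
    have e1 : (U ω - Ubar) ⬝ᵥ (Υ₁ *ᵥ (U ω - Ubar)) = a ω - 2 * l1 ω + c1 := by
      have t1 : U ω ⬝ᵥ (Υ₁ *ᵥ Ubar) = l1 ω := dotProduct_comm _ _
      have t2 : Ubar ⬝ᵥ (Υ₁ *ᵥ U ω) = l1 ω := by
        rw [symm_dot' Υ₁ hΥ₁s, dotProduct_comm]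
      rw [mulVec_sub, sub_dotProduct, dotProduct_sub, dotProduct_sub, t1, t2]
      simp only [ha, hl1, hc1]
      ring
    have e2 : (U ω - Ubar) ⬝ᵥ (M₁ *ᵥ (Z ω - Zbar)) = b ω - l2 ω - l3 ω + c2 := by
      have t3 : U ω ⬝ᵥ (M₁ *ᵥ Zbar) = l2 ω := dotProduct_comm _ _
      have t4 : Ubar ⬝ᵥ (M₁ *ᵥ Z ω) = l3 ω := by
        rw [dotProduct_mulVec, ← Matrix.mulVec_transpose]
      rw [mulVec_sub, sub_dotProduct, dotProduct_sub, dotProduct_sub, t3, t4]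
      simp only [hb, hl2, hl3, hc2]
      ring
    rw [e1, e2]
    ring
  -- integrability
  have iU : Integrable U μ := hU.integrable one_le_two
  have iZ : Integrable Z μ := hZ.integrable one_le_two
  have hZ' : MemLp (fun ω => Z ω - Zbar) 2 μ := hZ.sub (memLp_const Zbar)
  have ia : Integrable a μ := quad_integrable' Υ₁ U U hU hU
  have ib : Integrable b μ := quad_integrable' M₁ U Z hU hZ
  have iq : Integrable q μ := quad_integrable' (M₁ᵀ * Υ₁⁻¹ * M₁) _ _ hZ' hZ'
  have il1 : Integrable l1 μ := lin_integrable' _ U iU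
  have il2 : Integrable l2 μ := lin_integrable' _ U iU
  have il3 : Integrable l3 μ := lin_integrable' _ Z iZ
  -- integral of the first RHS term
  have eint : (∫ ω, ((U ω - Ubar) + Υ₁⁻¹ *ᵥ (M₁ *ᵥ (Z ω - Zbar)))
          ⬝ᵥ (Υ₁ *ᵥ ((U ω - Ubar) + Υ₁⁻¹ *ᵥ (M₁ *ᵥ (Z ω - Zbar)))) ∂μ)
      = (∫ ω, a ω ∂μ) + 2 * (∫ ω, b ω ∂μ) + (∫ ω, q ω ∂μ) - c1 - 2 * c2 := by
    rw [integral_congr_ae (Filter.Eventually.of_forall hpt)]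
    have ib2 : Integrable (fun ω => 2 * b ω) μ := ib.const_mul 2
    have il1' : Integrable (fun ω => 2 * l1 ω) μ := il1.const_mul 2
    have il2' : Integrable (fun ω => 2 * l2 ω) μ := il2.const_mul 2
    have il3' : Integrable (fun ω => 2 * l3 ω) μ := il3.const_mul 2
    have h1 : Integrable (fun ω => a ω + 2 * b ω) μ := ia.add ib2
    have h2 : Integrable (fun ω => a ω + 2 * b ω + q ω) μ := h1.add iq
    have h3 : Integrable (fun ω => a ω + 2 * b ω + q ω - 2 * l1 ω) μ := h2.sub il1'
    have h4 : Integrable (fun ω => a ω + 2 * b ω + q ω - 2 * l1 ω - 2 * l2 ω) μ := h3.sub il2'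
    have h5 : Integrable (fun ω => a ω + 2 * b ω + q ω - 2 * l1 ω - 2 * l2 ω - 2 * l3 ω) μ :=
      h4.sub il3'
    rw [integral_add h5 (integrable_const _), integral_const]
    rw [integral_sub h4 il3', integral_sub h3 il2', integral_sub h2 il1',
      integral_add h1 iq, integral_add ia ib2,
      integral_const_mul, integral_const_mul, integral_const_mul, integral_const_mul]
    have j1 : ∫ ω, l1 ω ∂μ = c1 := by
      rw [hl1, lin_integral' _ U iU, ← hUbar, dotProduct_comm]
    have j2 : ∫ ω, l2 ω ∂μ = c2 := by
      rw [hl2, lin_integral' _ U iU, ← hUbar, dotProduct_comm]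
    have j3 : ∫ ω, l3 ω ∂μ = c2 := by
      rw [hl3, lin_integral' _ Z iZ, ← hZbar, Matrix.mulVec_transpose, ← dotProduct_mulVec]
    rw [j1, j2, j3]
    simp
    ring
  -- the deterministic completion of squares
  have edet : (Ubar + Υ₂⁻¹ *ᵥ (M₂ *ᵥ Zbar)) ⬝ᵥ (Υ₂ *ᵥ (Ubar + Υ₂⁻¹ *ᵥ (M₂ *ᵥ Zbar)))
      = Ubar ⬝ᵥ (Υ₂ *ᵥ Ubar) + 2 * (Ubar ⬝ᵥ (M₂ *ᵥ Zbar))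
        + Zbar ⬝ᵥ ((M₂ᵀ * Υ₂⁻¹ * M₂) *ᵥ Zbar) :=
    cos_pt' Υ₂ hΥ₂s hinv2 M₂ Ubar Zbar
  rw [eint, edet, Matrix.sub_mulVec, dotProduct_sub, Matrix.sub_mulVec, dotProduct_sub]
  simp only [ha, hb, hq, hc1, hc2]
  ring
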